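/- Suppose f : ℝ^d → ℝ is twice continuously differentiable with γ-Lipschitz Hessian. Fix μ ∈ ℝ^d, α > 0, and a symmetric positive definite d×d matrix Σ with τ·I ⪯ Σ^{-1} ⪯ ζ·I where 0 < τ ≤ ζ. If u₁,…,u_b ∈ ℝ^d satisfy ‖uᵢ‖² ≤ c for every i, for some c > 0, then ‖Ḡ(Σ) − (1/(2b))·Σ_{i=1}^b uᵢᵀΣ^{1/2}∇²f(μ)Σ^{1/2}uᵢ·(Σ^{-1/2}uᵢuᵢᵀΣ^{-1/2} − Σ^{-1})‖₂ ≤ c^{3/2}·(c + 1)·ζγα/(4τ^{3/2}), where ‖·‖₂ is the operator norm. -/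

import Mathlib

open MeasureTheory ProbabilityTheory Matrix
open scoped BigOperators RealInnerProductSpace

noncomputable section

abbrev Vec (d : ℕ) := EuclideanSpace ℝ (Fin d)
abbrev Mat (d : ℕ) := Matrix (Fin d) (Fin d) ℝ

/-- View a Euclidean vector as a plain function. -/
def toPi {d : ℕ} (u : Vec d) : Fin d → ℝ := u
/-- View a plain function as a Euclidean vector. -/
def ofPi {d : ℕ} (u : Fin d → ℝ) : Vec d := WithLp.toLp 2 u

/-- Matrix-vector multiplication on Euclidean space. -/
def mvec {d : ℕ} (A : Mat d) (u : Vec d) : Vec d := ofPi (A.mulVec (toPi u))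

/-- The standard Gaussian measure N(0, I_d) on ℝ^d. -/
def gaussD (d : ℕ) : Measure (Vec d) :=
  (Measure.pi fun _ : Fin d => gaussianReal 0 1).map (MeasurableEquiv.toLp 2 (Fin d → ℝ))

/-- Frobenius norm of a matrix. -/
def matFrobNorm {m n : ℕ} (A : Matrix (Fin m) (Fin n) ℝ) : ℝ :=
  Real.sqrt (∑ i, ∑ j, (A i j) ^ 2)

/-- Operator (spectral) norm of a matrix. -/
def matOpNorm {m n : ℕ} (A : Matrix (Fin m) (Fin n) ℝ) : ℝ :=
  ‖LinearMap.toContinuousLinearMap (Matrix.toEuclideanLin A)‖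

/-- Loewner order `A ⪯ B`. -/
def loeLE {d : ℕ} (A B : Mat d) : Prop := (B - A).PosSemidef

/-- Hessian matrix of `f` at `x`. -/
def hess {d : ℕ} (f : Vec d → ℝ) (x : Vec d) : Mat d :=
  Matrix.of fun i j =>
    iteratedFDeriv ℝ 2 f x ![EuclideanSpace.single i 1, EuclideanSpace.single j 1]

/-- Membership in `S = {Σ symmetric : ζ⁻¹ I ⪯ Σ ⪯ τ⁻¹ I}`. -/
def Smem {d : ℕ} (τ ζ : ℝ) (A : Mat d) : Prop :=
  A.IsSymm ∧ loeLE (ζ⁻¹ • 1) A ∧ loeLE A (τ⁻¹ • 1)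

/-- Membership in `S' = {A symmetric : τ I ⪯ A ⪯ ζ I}`. -/
def S'mem {d : ℕ} (τ ζ : ℝ) (A : Mat d) : Prop :=
  A.IsSymm ∧ loeLE (τ • 1) A ∧ loeLE A (ζ • 1)

/-- The square root of a positive semidefinite matrix (Mathlib's former `PosSemidef.sqrt`). -/
def Matrix.PosSemidef.sqrt {n : Type*} [Fintype n] [DecidableEq n]
    {A : Matrix n n ℝ} (hA : A.PosSemidef) : Matrix n n ℝ :=
  hA.1.eigenvectorUnitary.1 * diagonal ((√·) ∘ hA.1.eigenvalues) *
    (star hA.1.eigenvectorUnitary : Matrix n n ℝ)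

/-- The regularized reparameterized objective `Q_α(μ, Σ)`. -/
def Qa {d : ℕ} (f : Vec d → ℝ) (α : ℝ) (μ : Vec d) (S : Mat d) (hS : S.PosSemidef) : ℝ :=
  (∫ u, f (μ + α • mvec hS.sqrt u) ∂ gaussD d) - α ^ 2 / 2 * Real.log S.det

/-- `Ḡ(Σ)`, the zeroth-order estimator of `2α⁻² ∂J/∂Σ` built from query points
`u₁, …, u_b` (here `Q = Σ^{1/2}`). -/
def Gbar {d b : ℕ} (f : Vec d → ℝ) (α : ℝ) (S Q : Mat d) (μ : Vec d)
    (u : Fin b → Vec d) : Mat d :=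
  (1 / (2 * (b : ℝ) * α ^ 2)) • ∑ i : Fin b,
    (f (μ - α • mvec Q (u i)) + f (μ + α • mvec Q (u i)) - 2 * f μ) •
      (Matrix.of fun k l =>
        (Q⁻¹.mulVec (toPi (u i))) k * (Q⁻¹.mulVec (toPi (u i))) l - S⁻¹ k l)

section Aux

variable {d : ℕ}

lemma Matrix.PosSemidef.posSemidef_sqrt {A : Mat d} (hA : A.PosSemidef) : hA.sqrt.PosSemidef := by
  unfold Matrix.PosSemidef.sqrt
  rw [star_eq_conjTranspose]
  exact (posSemidef_diagonal_iff.2 (fun i => Real.sqrt_nonneg _)).mul_mul_conjTranspose_same _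

lemma Matrix.PosSemidef.sqrt_mul_self {A : Mat d} (hA : A.PosSemidef) : hA.sqrt * hA.sqrt = A := by
  unfold Matrix.PosSemidef.sqrt
  set U : Mat d := (hA.1.eigenvectorUnitary : Mat d)
  have hUU : star U * U = 1 := Unitary.coe_star_mul_self _
  have hD : diagonal ((√·) ∘ hA.1.eigenvalues) * diagonal ((√·) ∘ hA.1.eigenvalues)
      = diagonal (RCLike.ofReal ∘ hA.1.eigenvalues) := by
    rw [diagonal_mul_diagonal]
    congr 1
    funext i
    simp [Real.mul_self_sqrt (hA.eigenvalues_nonneg i)]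
  calc U * diagonal ((√·) ∘ hA.1.eigenvalues) * star U *
        (U * diagonal ((√·) ∘ hA.1.eigenvalues) * star U)
      = U * (diagonal ((√·) ∘ hA.1.eigenvalues) * (star U * U) *
          diagonal ((√·) ∘ hA.1.eigenvalues)) * star U := by
        simp only [Matrix.mul_assoc]
    _ = U * diagonal (RCLike.ofReal ∘ hA.1.eigenvalues) * star U := by
        rw [hUU, Matrix.mul_one, hD]
    _ = A := by
        conv_rhs => rw [hA.1.spectral_theorem]
        rfl

lemma mvec_eq_clm (A : Mat d) (x : Vec d) :
    mvec A x = LinearMap.toContinuousLinearMap (Matrix.toEuclideanLin A) x := rfl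

lemma matOpNorm_le' {A : Mat d} {C : ℝ} (hC : 0 ≤ C)
    (h : ∀ x : Vec d, ‖mvec A x‖ ≤ C * ‖x‖) : matOpNorm A ≤ C :=
  ContinuousLinearMap.opNorm_le_bound _ hC (fun x => h x)

lemma mvec_le_matOpNorm (A : Mat d) (x : Vec d) :
    ‖mvec A x‖ ≤ matOpNorm A * ‖x‖ :=
  (LinearMap.toContinuousLinearMap (Matrix.toEuclideanLin A)).le_opNorm x

lemma matOpNorm_smul (r : ℝ) (A : Mat d) :
    matOpNorm (r • A) = |r| * matOpNorm A := by
  unfold matOpNorm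
  rw [_root_.map_smul, _root_.map_smul]
  have := norm_smul (α := ℝ) (β := EuclideanSpace ℝ (Fin d) →L[ℝ] EuclideanSpace ℝ (Fin d)) r
    (LinearMap.toContinuousLinearMap (Matrix.toEuclideanLin A))
  rw [this, Real.norm_eq_abs]

lemma matOpNorm_sub_le (A B : Mat d) :
    matOpNorm (A - B) ≤ matOpNorm A + matOpNorm B := by
  unfold matOpNorm
  rw [map_sub, map_sub]
  exact norm_sub_le _ _

lemma matOpNorm_sum_le {b : ℕ} (M : Fin b → Mat d) :
    matOpNorm (∑ i, M i) ≤ ∑ i, matOpNorm (M i) := by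
  unfold matOpNorm
  rw [map_sum, map_sum]
  exact norm_sum_le _ _

lemma inner_eq_dot (x y : Vec d) : ⟪x, y⟫ = (toPi x) ⬝ᵥ (toPi y) := by
  simp [PiLp.inner_apply, dotProduct, toPi, RCLike.inner_apply, mul_comm]

lemma norm_sq_eq_dot (x : Vec d) : ‖x‖ ^ 2 = (toPi x) ⬝ᵥ (toPi x) := by
  rw [← inner_eq_dot, real_inner_self_eq_norm_sq]

lemma dot_mulVec_symm {A : Mat d} (hA : A.IsSymm) (x y : Fin d → ℝ) :
    x ⬝ᵥ A *ᵥ y = (A *ᵥ x) ⬝ᵥ y := by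
  rw [Matrix.dotProduct_mulVec]
  congr 1
  nth_rewrite 1 [← hA]
  exact Matrix.vecMul_transpose A x

lemma psd_dot_nonneg {A : Mat d} (hA : A.PosSemidef) (x : Fin d → ℝ) :
    0 ≤ x ⬝ᵥ A *ᵥ x := by simpa using hA.dotProduct_mulVec_nonneg x

lemma psd_isSymm {A : Mat d} (hA : A.PosSemidef) : A.IsSymm := by
  have := hA.1
  rwa [Matrix.IsHermitian, Matrix.conjTranspose_eq_transpose_of_trivial] at this

lemma psd_cs {A : Mat d} (hA : A.PosSemidef) (x y : Fin d → ℝ) :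
    (x ⬝ᵥ A *ᵥ y) ^ 2 ≤ (x ⬝ᵥ A *ᵥ x) * (y ⬝ᵥ A *ᵥ y) := by
  have hsymm : A.IsSymm := psd_isSymm hA
  have key : ∀ t : ℝ, 0 ≤ (y ⬝ᵥ A *ᵥ y) * (t * t) + (2 * (x ⬝ᵥ A *ᵥ y)) * t + x ⬝ᵥ A *ᵥ x := by
    intro t
    have h0 := psd_dot_nonneg hA (x + t • y)
    have hyx : y ⬝ᵥ A *ᵥ x = x ⬝ᵥ A *ᵥ y := by
      rw [dot_mulVec_symm hsymm y x, dotProduct_comm]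
    simp only [Matrix.mulVec_add, Matrix.mulVec_smul, dotProduct_add,
      add_dotProduct, dotProduct_smul, smul_dotProduct,
      smul_eq_mul, hyx] at h0
    nlinarith [h0]
  have hd := discrim_le_zero key
  rw [discrim] at hd
  nlinarith [hd]

lemma dot_self_nonneg' (y : Fin d → ℝ) : 0 ≤ y ⬝ᵥ y := by
  have : y ⬝ᵥ y = ‖ofPi y‖ ^ 2 := (norm_sq_eq_dot (ofPi y)).symm
  rw [this]; positivity

lemma opNorm_le_of_quad {A : Mat d} (hA : A.PosSemidef) {z : ℝ} (hz : 0 ≤ z)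
    (hq : ∀ x : Fin d → ℝ, x ⬝ᵥ A *ᵥ x ≤ z * (x ⬝ᵥ x)) : matOpNorm A ≤ z := by
  apply matOpNorm_le' hz
  intro x
  have hsymm : A.IsSymm := psd_isSymm hA
  set xp : Fin d → ℝ := toPi x with hxp
  set y : Fin d → ℝ := A *ᵥ xp with hy
  have hyy : ‖mvec A x‖ ^ 2 = y ⬝ᵥ y := norm_sq_eq_dot (ofPi y)
  have h2 : y ⬝ᵥ y = xp ⬝ᵥ A *ᵥ y := (dot_mulVec_symm hsymm xp y).symm
  have h3 := psd_cs hA xp y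
  have h4 := hq xp
  have h5 := hq y
  have hxx : xp ⬝ᵥ xp = ‖x‖ ^ 2 := (norm_sq_eq_dot x).symm
  have hq0 : 0 ≤ y ⬝ᵥ y := dot_self_nonneg' y
  have hAx : 0 ≤ xp ⬝ᵥ A *ᵥ xp := psd_dot_nonneg hA xp
  have key : ‖mvec A x‖ ^ 2 ≤ (z * ‖x‖) ^ 2 := by
    rcases eq_or_lt_of_le hq0 with h0 | h0
    · rw [hyy, ← h0]; positivity
    · rw [hyy]
      have hstep : (y ⬝ᵥ y) ^ 2 ≤ (z * ‖x‖)^2 * (y ⬝ᵥ y) := by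
        calc (y ⬝ᵥ y) ^ 2 = (xp ⬝ᵥ A *ᵥ y) ^ 2 := by rw [← h2]
        _ ≤ (xp ⬝ᵥ A *ᵥ xp) * (y ⬝ᵥ A *ᵥ y) := h3
        _ ≤ (z * (xp ⬝ᵥ xp)) * (z * (y ⬝ᵥ y)) := by
              have hyAy : 0 ≤ y ⬝ᵥ A *ᵥ y := psd_dot_nonneg hA y
              exact mul_le_mul h4 h5 hyAy (by rw [hxx]; positivity)
        _ = (z * ‖x‖)^2 * (y ⬝ᵥ y) := by rw [hxx]; ring
      nlinarith [hstep, h0]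
  have h6 : 0 ≤ z * ‖x‖ := by positivity
  nlinarith [key, norm_nonneg (mvec A x), h6]

lemma mvec_outer (v : Vec d) (x : Vec d) :
    mvec (Matrix.of fun k l => toPi v k * toPi v l) x = (toPi v ⬝ᵥ toPi x) • v := by
  show ofPi _ = _
  have : (Matrix.of fun k l => toPi v k * toPi v l) *ᵥ toPi x
      = (toPi v ⬝ᵥ toPi x) • toPi v := by
    funext k
    simp only [Matrix.mulVec, dotProduct, Matrix.of_apply, Pi.smul_apply, smul_eq_mul]
    rw [Finset.sum_mul]
    exact Finset.sum_congr rfl fun j _ => by ring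
  rw [this]; rfl

lemma matOpNorm_outer_le (v : Vec d) :
    matOpNorm (Matrix.of fun k l => toPi v k * toPi v l) ≤ ‖v‖ ^ 2 := by
  apply matOpNorm_le' (by positivity)
  intro x
  rw [mvec_outer]
  rw [norm_smul, Real.norm_eq_abs]
  have h1 : |toPi v ⬝ᵥ toPi x| ≤ ‖v‖ * ‖x‖ := by
    rw [← inner_eq_dot]
    exact abs_real_inner_le_norm v x
  calc |toPi v ⬝ᵥ toPi x| * ‖v‖ ≤ (‖v‖ * ‖x‖) * ‖v‖ :=
        mul_le_mul_of_nonneg_right h1 (norm_nonneg v)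
  _ = ‖v‖ ^ 2 * ‖x‖ := by ring

lemma loe_quad {A B : Mat d} (h : loeLE A B) (x : Fin d → ℝ) :
    x ⬝ᵥ A *ᵥ x ≤ x ⬝ᵥ B *ᵥ x := by
  have h0 := psd_dot_nonneg h x
  simp only [Matrix.sub_mulVec, dotProduct_sub] at h0
  linarith

lemma smul_one_quad (z : ℝ) (x : Fin d → ℝ) :
    x ⬝ᵥ (z • (1 : Mat d)) *ᵥ x = z * (x ⬝ᵥ x) := by
  rw [Matrix.smul_mulVec, Matrix.one_mulVec, dotProduct_smul, smul_eq_mul]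

lemma euclidean_decomp (v : Vec d) :
    ∑ i, toPi v i • EuclideanSpace.single i (1 : ℝ) = v := by
  have h := (EuclideanSpace.basisFun (Fin d) ℝ).toBasis.sum_repr v
  simpa [EuclideanSpace.basisFun_apply, EuclideanSpace.basisFun_repr,
    OrthonormalBasis.coe_toBasis, OrthonormalBasis.coe_toBasis_repr_apply, toPi] using h

lemma clm_bilin_expand (B : Vec d →L[ℝ] Vec d →L[ℝ] ℝ) (v w : Vec d) :
    B v w = ∑ i, ∑ j, toPi v i * toPi w j *
      B (EuclideanSpace.single i (1:ℝ)) (EuclideanSpace.single j (1:ℝ)) := by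
  conv_lhs => rw [← euclidean_decomp v, ← euclidean_decomp w]
  simp only [map_sum, _root_.map_smul, ContinuousLinearMap.sum_apply,
    ContinuousLinearMap.smul_apply, smul_eq_mul, Finset.mul_sum]
  rw [Finset.sum_comm]
  refine Finset.sum_congr rfl fun i _ => Finset.sum_congr rfl fun j _ => ?_
  ring

lemma hessQuad (f : Vec d → ℝ) (y : Vec d) (v w : Vec d) :
    fderiv ℝ (fderiv ℝ f) y v w = ⟪v, mvec (hess f y) w⟫ := by
  rw [inner_eq_dot, clm_bilin_expand (fderiv ℝ (fderiv ℝ f) y) v w]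
  simp only [dotProduct, Matrix.mulVec, hess, Matrix.of_apply, mvec, ofPi, toPi]
  refine Finset.sum_congr rfl fun i _ => ?_
  rw [Finset.mul_sum]
  refine Finset.sum_congr rfl fun j _ => ?_
  rw [iteratedFDeriv_two_apply]
  simp only [Matrix.cons_val_zero, Matrix.cons_val_one, Matrix.head_cons]
  ring

lemma inner_mvec_abs_le (A : Mat d) (v w : Vec d) :
    |⟪v, mvec A w⟫| ≤ matOpNorm A * ‖v‖ * ‖w‖ := by
  calc |⟪v, mvec A w⟫| ≤ ‖v‖ * ‖mvec A w‖ := abs_real_inner_le_norm v (mvec A w)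
  _ ≤ ‖v‖ * (matOpNorm A * ‖w‖) :=
      mul_le_mul_of_nonneg_left (mvec_le_matOpNorm A w) (norm_nonneg v)
  _ = matOpNorm A * ‖v‖ * ‖w‖ := by ring

lemma mvec_sub (A B : Mat d) (v : Vec d) :
    mvec A v - mvec B v = mvec (A - B) v := by
  show ofPi _ - ofPi _ = ofPi ((A - B) *ᵥ toPi v)
  rw [Matrix.sub_mulVec]
  rfl

lemma hess_lip {f : Vec d → ℝ} {γ : ℝ}
    (hγ : ∀ x y : Vec d, matOpNorm (hess f x - hess f y) ≤ γ * ‖x - y‖)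
    (y z v : Vec d) :
    |fderiv ℝ (fderiv ℝ f) y v v - fderiv ℝ (fderiv ℝ f) z v v| ≤ γ * ‖y - z‖ * ‖v‖ ^ 2 := by
  rw [hessQuad, hessQuad]
  have heq : ⟪v, mvec (hess f y) v⟫ - ⟪v, mvec (hess f z) v⟫
      = ⟪v, mvec (hess f y - hess f z) v⟫ := by
    rw [← inner_sub_right, mvec_sub]
  rw [heq]
  calc |⟪v, mvec (hess f y - hess f z) v⟫|
      ≤ matOpNorm (hess f y - hess f z) * ‖v‖ * ‖v‖ := inner_mvec_abs_le _ _ _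
  _ ≤ γ * ‖y - z‖ * ‖v‖ * ‖v‖ := by
      apply mul_le_mul_of_nonneg_right _ (norm_nonneg v)
      exact mul_le_mul_of_nonneg_right (hγ y z) (norm_nonneg v)
  _ = γ * ‖y - z‖ * ‖v‖ ^ 2 := by ring

lemma taylor_sym {f : Vec d → ℝ} {γ : ℝ} (hγ0 : 0 ≤ γ) (hf : ContDiff ℝ 2 f)
    (hlip : ∀ y z v : Vec d,
      |fderiv ℝ (fderiv ℝ f) y v v - fderiv ℝ (fderiv ℝ f) z v v| ≤ γ * ‖y - z‖ * ‖v‖ ^ 2)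
    (x h : Vec d) :
    |f (x + h) + f (x - h) - 2 * f x - fderiv ℝ (fderiv ℝ f) x h h| ≤ γ / 2 * ‖h‖ ^ 3 := by
  set g := fderiv ℝ f with hgdef
  set A := fun y : Vec d => fderiv ℝ g y with hAdef
  have hfd : Differentiable ℝ f := hf.differentiable two_ne_zero
  have hg1 : ContDiff ℝ 1 g := hf.fderiv_right (by norm_num)
  have hgd : Differentiable ℝ g := hg1.differentiable one_ne_zero
  have lineD : ∀ (w : Vec d) (t : ℝ), HasDerivAt (fun s : ℝ => x + s • w) w t := by
    intro w t
    simpa using ((hasDerivAt_id t).smul_const w).const_add x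
  set χ : ℝ → ℝ := fun s => g (x + s • h) h - g (x + s • (-h)) h - 2 * s * A x h h with hχdef
  have hχd : ∀ s : ℝ,
      HasDerivAt χ ((A (x + s • h) h h - A x h h) + (A (x + s • (-h)) h h - A x h h)) s := by
    intro s
    have t1 : HasDerivAt (fun s : ℝ => g (x + s • h) h) (A (x + s • h) h h) s := by
      have hD : HasFDerivAt g (A (x + s • h)) (x + s • h) := (hgd _).hasFDerivAt
      have h1 := by have h0 := hD.comp_hasDerivAt s (lineD h s); have h2 := hasDerivAt_const s h; exact h0.clm_apply h2
      simpa using h1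
    have t2 : HasDerivAt (fun s : ℝ => g (x + s • (-h)) h) (A (x + s • (-h)) (-h) h) s := by
      have hD : HasFDerivAt g (A (x + s • (-h))) (x + s • (-h)) := (hgd _).hasFDerivAt
      have h1 := by have h0 := hD.comp_hasDerivAt s (lineD (-h) s); have h2 := hasDerivAt_const s h; exact h0.clm_apply h2
      simpa using h1
    have t3 : HasDerivAt (fun s : ℝ => 2 * s * A x h h) (2 * A x h h) s := by
      have := ((hasDerivAt_id s).const_mul (2:ℝ)).mul_const (A x h h)
      simpa using this
    have := (t1.sub t2).sub t3
    refine this.congr_deriv ?_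
    simp only [map_neg, ContinuousLinearMap.neg_apply]
    ring
  have hχbound : ∀ t ∈ Set.Icc (0:ℝ) 1, ‖χ t‖ ≤ γ * ‖h‖ ^ 3 * t ^ 2 := by
    have hcont : ContinuousOn χ (Set.Icc 0 1) :=
      fun s _ => ((hχd s).continuousAt).continuousWithinAt
    have hderiv : ∀ s ∈ Set.Ico (0:ℝ) 1, HasDerivWithinAt χ
        ((A (x + s • h) h h - A x h h) + (A (x + s • (-h)) h h - A x h h)) (Set.Ici s) s :=
      fun s _ => (hχd s).hasDerivWithinAt
    have ha : ‖χ 0‖ ≤ γ * ‖h‖ ^ 3 * (0:ℝ) ^ 2 := by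
      simp [hχdef]
    have hB : ∀ s : ℝ, HasDerivAt (fun s => γ * ‖h‖ ^ 3 * s ^ 2) (γ * ‖h‖ ^ 3 * (2 * s)) s := by
      intro s
      have := (hasDerivAt_pow 2 s).const_mul (γ * ‖h‖ ^ 3)
      simpa using this
    have bound : ∀ s ∈ Set.Ico (0:ℝ) 1,
        ‖(A (x + s • h) h h - A x h h) + (A (x + s • (-h)) h h - A x h h)‖
          ≤ γ * ‖h‖ ^ 3 * (2 * s) := by
      intro s hs
      have hn1 : ‖x + s • h - x‖ = s * ‖h‖ := by
        rw [add_sub_cancel_left, norm_smul, Real.norm_eq_abs, abs_of_nonneg hs.1]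
      have hn2 : ‖x + s • (-h) - x‖ = s * ‖h‖ := by
        rw [add_sub_cancel_left, norm_smul, Real.norm_eq_abs, abs_of_nonneg hs.1, norm_neg]
      have b1 := hlip (x + s • h) x h
      have b2 := hlip (x + s • (-h)) x h
      rw [hn1] at b1
      rw [hn2] at b2
      rw [Real.norm_eq_abs]
      calc |(A (x + s • h) h h - A x h h) + (A (x + s • (-h)) h h - A x h h)|
          ≤ |A (x + s • h) h h - A x h h| + |A (x + s • (-h)) h h - A x h h| := abs_add_le _ _
        _ ≤ γ * (s * ‖h‖) * ‖h‖ ^ 2 + γ * (s * ‖h‖) * ‖h‖ ^ 2 := add_le_add b1 b2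
        _ = γ * ‖h‖ ^ 3 * (2 * s) := by ring
    exact fun t ht =>
      image_norm_le_of_norm_deriv_right_le_deriv_boundary hcont hderiv ha hB bound ht
  set ψ : ℝ → ℝ := fun t => f (x + t • h) + f (x + t • (-h)) - 2 * f x - t ^ 2 * A x h h
    with hψdef
  have hψd : ∀ t : ℝ, HasDerivAt ψ (χ t) t := by
    intro t
    have p1 : HasDerivAt (fun t : ℝ => f (x + t • h)) (g (x + t • h) h) t :=
      (hfd _).hasFDerivAt.comp_hasDerivAt t (lineD h t)
    have p2 : HasDerivAt (fun t : ℝ => f (x + t • (-h))) (g (x + t • (-h)) (-h)) t :=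
      (hfd _).hasFDerivAt.comp_hasDerivAt t (lineD (-h) t)
    have p3 : HasDerivAt (fun _ : ℝ => 2 * f x) 0 t := hasDerivAt_const t _
    have p4 : HasDerivAt (fun t : ℝ => t ^ 2 * A x h h) (2 * t * A x h h) t := by
      have := (hasDerivAt_pow 2 t).mul_const (A x h h)
      simpa using this
    have := ((p1.add p2).sub p3).sub p4
    refine this.congr_deriv ?_
    simp only [hχdef, map_neg, ContinuousLinearMap.neg_apply]
    ring
  have hψbound : ‖ψ 1‖ ≤ γ * ‖h‖ ^ 3 / 3 * 1 ^ 3 := by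
    have hcont : ContinuousOn ψ (Set.Icc 0 1) :=
      fun s _ => ((hψd s).continuousAt).continuousWithinAt
    have hderiv : ∀ s ∈ Set.Ico (0:ℝ) 1, HasDerivWithinAt ψ (χ s) (Set.Ici s) s :=
      fun s _ => (hψd s).hasDerivWithinAt
    have ha : ‖ψ 0‖ ≤ γ * ‖h‖ ^ 3 / 3 * (0:ℝ) ^ 3 := by
      have : ψ 0 = 0 := by simp [hψdef]; ring
      simp [this]
    have hB : ∀ s : ℝ, HasDerivAt (fun s => γ * ‖h‖ ^ 3 / 3 * s ^ 3)
        (γ * ‖h‖ ^ 3 / 3 * (3 * s ^ 2)) s := by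
      intro s
      have := (hasDerivAt_pow 3 s).const_mul (γ * ‖h‖ ^ 3 / 3)
      simpa using this
    have bound : ∀ s ∈ Set.Ico (0:ℝ) 1, ‖χ s‖ ≤ γ * ‖h‖ ^ 3 / 3 * (3 * s ^ 2) := by
      intro s hs
      have := hχbound s ⟨hs.1, le_of_lt hs.2⟩
      calc ‖χ s‖ ≤ γ * ‖h‖ ^ 3 * s ^ 2 := this
        _ = γ * ‖h‖ ^ 3 / 3 * (3 * s ^ 2) := by ring
    exact image_norm_le_of_norm_deriv_right_le_deriv_boundary hcont hderiv ha hB bound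
      (Set.right_mem_Icc.2 zero_le_one)
  have hψ1 : ψ 1 = f (x + h) + f (x - h) - 2 * f x - fderiv ℝ (fderiv ℝ f) x h h := by
    simp only [hψdef, one_smul, one_pow, one_mul, smul_neg, ← sub_eq_add_neg]
    rfl
  rw [← hψ1]
  rw [Real.norm_eq_abs] at hψbound
  have hh3 : 0 ≤ ‖h‖ ^ 3 := by positivity
  nlinarith [hψbound]

lemma rpow_3_2_of_sq (r : ℝ) (hr : 0 ≤ r) : (r ^ 2 : ℝ) ^ ((3:ℝ)/2) = r ^ 3 := by
  rw [← Real.rpow_natCast r 2, ← Real.rpow_mul hr, ← Real.rpow_natCast r 3]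
  norm_num

lemma cube_bound {r B : ℝ} (hr : 0 ≤ r) (h : r ^ 2 ≤ B) : r ^ 3 ≤ B ^ ((3:ℝ)/2) := by
  calc r ^ 3 = (r ^ 2) ^ ((3:ℝ)/2) := (rpow_3_2_of_sq r hr).symm
  _ ≤ B ^ ((3:ℝ)/2) := Real.rpow_le_rpow (sq_nonneg r) h (by norm_num)

end Aux

set_option maxHeartbeats 1600000 in
/-- operator-norm bound comparing `Ḡ(Σ)` with its quadratic-model
counterpart, given `‖uᵢ‖² ≤ c` for all `i`. -/
theorem stmt13 {d b : ℕ} (hd : 1 ≤ d) (hb : 1 ≤ b)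
    (f : Vec d → ℝ) (γ : ℝ) (hγ0 : 0 ≤ γ) (hf : ContDiff ℝ 2 f)
    (hγ : ∀ x y : Vec d, matOpNorm (hess f x - hess f y) ≤ γ * ‖x - y‖)
    (μ : Vec d) (α : ℝ) (hα : 0 < α) (τ ζ : ℝ) (hτ : 0 < τ) (hτζ : τ ≤ ζ)
    (S : Mat d) (hSsymm : S.IsSymm) (hS : S.PosDef)
    (hτS : loeLE (τ • 1) S⁻¹) (hSζ : loeLE S⁻¹ (ζ • 1))
    (u : Fin b → Vec d) (c : ℝ) (hc : 0 < c) (hu : ∀ i, ‖u i‖ ^ 2 ≤ c) :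
    matOpNorm (Gbar f α S hS.posSemidef.sqrt μ u
        - (1 / (2 * (b : ℝ))) • ∑ i : Fin b,
            ⟪u i, mvec (hS.posSemidef.sqrt * hess f μ * hS.posSemidef.sqrt) (u i)⟫ •
              (Matrix.of fun k l =>
                ((hS.posSemidef.sqrt)⁻¹.mulVec (toPi (u i))) k *
                  ((hS.posSemidef.sqrt)⁻¹.mulVec (toPi (u i))) l - S⁻¹ k l))
      ≤ c ^ (3 / 2 : ℝ) * (c + 1) * ζ * γ * α / (4 * τ ^ (3 / 2 : ℝ)) := by
  classical
  set Q : Mat d := hS.posSemidef.sqrt with hQdef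
  set H : Mat d := hess f μ with hHdef
  set A : Vec d → (Vec d →L[ℝ] Vec d →L[ℝ] ℝ) := fun y => fderiv ℝ (fderiv ℝ f) y with hAdef
  have hζ0 : (0:ℝ) < ζ := lt_of_lt_of_le hτ hτζ
  have hb0 : (0:ℝ) < (b:ℝ) := by exact_mod_cast hb
  have hα2 : (0:ℝ) < α ^ 2 := by positivity
  -- basic matrix facts
  have hQpsd : Q.PosSemidef := hS.posSemidef.posSemidef_sqrt
  have hQsymm : Q.IsSymm := psd_isSymm hQpsd
  have hQQ : Q * Q = S := hS.posSemidef.sqrt_mul_self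
  have hSdet : S.det ≠ 0 := ne_of_gt hS.det_pos
  have hQinv2 : Q⁻¹ * Q⁻¹ = S⁻¹ := by rw [← Matrix.mul_inv_rev, hQQ]
  have hQinvsymm : (Q⁻¹).IsSymm := by
    rw [Matrix.IsSymm, Matrix.transpose_nonsing_inv, hQsymm]
  have hSinv : S⁻¹ * S = 1 := Matrix.nonsing_inv_mul S (isUnit_iff_ne_zero.2 hSdet)
  have hSinvsymm : (S⁻¹).IsSymm := by
    rw [Matrix.IsSymm, Matrix.transpose_nonsing_inv, hSsymm]
  have hSinvpsd : (S⁻¹).PosSemidef := hS.inv.posSemidef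
  -- quadratic form bounds
  have qζ : ∀ p : Fin d → ℝ, p ⬝ᵥ S⁻¹ *ᵥ p ≤ ζ * (p ⬝ᵥ p) := by
    intro p
    have := loe_quad hSζ p
    rwa [smul_one_quad] at this
  have qτ : ∀ p : Fin d → ℝ, τ * (p ⬝ᵥ p) ≤ p ⬝ᵥ S⁻¹ *ᵥ p := by
    intro p
    have := loe_quad hτS p
    rwa [smul_one_quad] at this
  have hopSinv : matOpNorm S⁻¹ ≤ ζ := opNorm_le_of_quad hSinvpsd hζ0.le qζ
  -- per-index data
  set v : Fin b → Vec d := fun i => mvec Q (u i) with hvdef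
  set w : Fin b → (Fin d → ℝ) := fun i => Q⁻¹ *ᵥ toPi (u i) with hwdef
  set M : Fin b → Mat d := fun i => Matrix.of fun k l => w i k * w i l - S⁻¹ k l with hMdef
  set ε : Fin b → ℝ := fun i =>
    f (μ - α • v i) + f (μ + α • v i) - 2 * f μ - α ^ 2 * ⟪u i, mvec (Q * H * Q) (u i)⟫
    with hεdef
  -- bound on ‖w i‖²
  have hw2 : ∀ i, w i ⬝ᵥ w i ≤ ζ * c := by
    intro i
    have h1 : w i ⬝ᵥ w i = toPi (u i) ⬝ᵥ S⁻¹ *ᵥ toPi (u i) := by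
      rw [hwdef]
      rw [← dot_mulVec_symm hQinvsymm (toPi (u i)) (Q⁻¹ *ᵥ toPi (u i))]
      rw [Matrix.mulVec_mulVec, hQinv2]
    have h2 := qζ (toPi (u i))
    have h3 : toPi (u i) ⬝ᵥ toPi (u i) ≤ c := by
      rw [← norm_sq_eq_dot]; exact hu i
    rw [h1]
    calc toPi (u i) ⬝ᵥ S⁻¹ *ᵥ toPi (u i) ≤ ζ * (toPi (u i) ⬝ᵥ toPi (u i)) := h2
    _ ≤ ζ * c := by exact mul_le_mul_of_nonneg_left h3 hζ0.le
  -- bound on ‖v i‖²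
  have hv2 : ∀ i, ‖v i‖ ^ 2 ≤ c / τ := by
    intro i
    set up : Fin d → ℝ := toPi (u i) with hup
    have hnv : ‖v i‖ ^ 2 = up ⬝ᵥ S *ᵥ up := by
      rw [norm_sq_eq_dot]
      show (Q *ᵥ up) ⬝ᵥ (Q *ᵥ up) = _
      rw [← dot_mulVec_symm hQsymm up (Q *ᵥ up), Matrix.mulVec_mulVec, hQQ]
    set y : Fin d → ℝ := S *ᵥ up with hy
    set q : ℝ := up ⬝ᵥ S *ᵥ up with hq
    have hyq : y ⬝ᵥ S⁻¹ *ᵥ y = q := by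
      rw [hy, Matrix.mulVec_mulVec, hSinv, Matrix.one_mulVec]
      rw [← dot_mulVec_symm hSsymm up up]
    have hτy := qτ y
    rw [hyq] at hτy
    have hq0 : 0 ≤ q := psd_dot_nonneg hS.posSemidef up
    have hcs : q ^ 2 ≤ (up ⬝ᵥ up) * (y ⬝ᵥ y) := by
      have h1 : q = up ⬝ᵥ y := by rw [hq, hy]
      have h2 : (⟪ofPi up, ofPi y⟫ : ℝ) ^ 2 ≤ ‖ofPi up‖ ^ 2 * ‖ofPi y‖ ^ 2 := by
        have h3 := abs_real_inner_le_norm (ofPi up) (ofPi y)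
        have h4 := pow_le_pow_left₀ (abs_nonneg _) h3 2
        rw [sq_abs, mul_pow] at h4
        exact h4
      rw [inner_eq_dot, norm_sq_eq_dot, norm_sq_eq_dot] at h2
      rw [h1]
      exact h2
    have hupup : up ⬝ᵥ up ≤ c := by rw [← norm_sq_eq_dot]; exact hu i
    have hyy0 : 0 ≤ y ⬝ᵥ y := dot_self_nonneg' y
    rw [hnv]
    rw [le_div_iff₀ hτ]
    rcases eq_or_lt_of_le hq0 with h0 | h0
    · rw [← h0]
      simpa using hc.le
    · have hup0 : 0 ≤ up ⬝ᵥ up := dot_self_nonneg' up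
      have s1 : τ * q ^ 2 ≤ c * q := by nlinarith [hcs, hτy, hupup, hyy0, hup0]
      nlinarith [s1, h0]
  -- operator norm bound for M i
  have hM : ∀ i, matOpNorm (M i) ≤ ζ * c + ζ := by
    intro i
    have hsplit : M i = (Matrix.of fun k l => w i k * w i l) - S⁻¹ := by
      ext k l
      simp [hMdef, Matrix.sub_apply]
    rw [hsplit]
    have h1 : matOpNorm (Matrix.of fun k l => w i k * w i l) ≤ ζ * c := by
      have := matOpNorm_outer_le (ofPi (w i))
      have h2 : ‖ofPi (w i)‖ ^ 2 ≤ ζ * c := by rw [norm_sq_eq_dot]; exact hw2 i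
      exact le_trans this h2
    calc matOpNorm ((Matrix.of fun k l => w i k * w i l) - S⁻¹)
        ≤ matOpNorm (Matrix.of fun k l => w i k * w i l) + matOpNorm S⁻¹ :=
          matOpNorm_sub_le _ _
    _ ≤ ζ * c + ζ := add_le_add h1 hopSinv
  -- Taylor bound on ε i
  have hlip : ∀ y z vv : Vec d,
      |fderiv ℝ (fderiv ℝ f) y vv vv - fderiv ℝ (fderiv ℝ f) z vv vv| ≤ γ * ‖y - z‖ * ‖vv‖ ^ 2 :=
    fun y z vv => hess_lip hγ y z vv
  have hε : ∀ i, |ε i| ≤ γ / 2 * (α ^ 3 * (c ^ ((3:ℝ)/2) / τ ^ ((3:ℝ)/2))) := by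
    intro i
    have hid : α ^ 2 * ⟪u i, mvec (Q * H * Q) (u i)⟫ = A μ (α • v i) (α • v i) := by
      have step1 : (⟪u i, mvec (Q * H * Q) (u i)⟫ : ℝ) = A μ (v i) (v i) := by
        rw [hAdef]
        rw [hessQuad f μ (v i) (v i), inner_eq_dot, inner_eq_dot]
        show toPi (u i) ⬝ᵥ (Q * H * Q) *ᵥ toPi (u i)
          = (Q *ᵥ toPi (u i)) ⬝ᵥ H *ᵥ (Q *ᵥ toPi (u i))
        rw [← dot_mulVec_symm hQsymm (toPi (u i)) (H *ᵥ (Q *ᵥ toPi (u i)))]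
        rw [Matrix.mulVec_mulVec, Matrix.mulVec_mulVec]
      rw [step1]
      simp only [_root_.map_smul, ContinuousLinearMap.smul_apply, smul_eq_mul]
      ring
    have tay := taylor_sym hγ0 hf hlip μ (α • v i)
    have hεeq : ε i = f (μ + α • v i) + f (μ - α • v i) - 2 * f μ
        - fderiv ℝ (fderiv ℝ f) μ (α • v i) (α • v i) := by
      rw [hεdef]
      show f (μ - α • v i) + f (μ + α • v i) - 2 * f μ
          - α ^ 2 * ⟪u i, mvec (Q * H * Q) (u i)⟫ = _
      rw [hid]
      show _ = f (μ + α • v i) + f (μ - α • v i) - 2 * f μ - A μ (α • v i) (α • v i)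
      ring
    rw [hεeq]
    refine le_trans tay ?_
    have hnorm3 : ‖α • v i‖ ^ 3 ≤ α ^ 3 * (c ^ ((3:ℝ)/2) / τ ^ ((3:ℝ)/2)) := by
      have hsq : ‖α • v i‖ ^ 2 ≤ α ^ 2 * (c / τ) := by
        rw [norm_smul, Real.norm_eq_abs, mul_pow, sq_abs]
        exact mul_le_mul_of_nonneg_left (hv2 i) hα2.le
      have := cube_bound (norm_nonneg (α • v i)) hsq
      refine le_trans this (le_of_eq ?_)
      rw [Real.mul_rpow hα2.le (by positivity), rpow_3_2_of_sq α hα.le,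
        Real.div_rpow hc.le hτ.le]
    have hγh : 0 ≤ γ / 2 := by positivity
    exact mul_le_mul_of_nonneg_left hnorm3 hγh
  -- the difference identity
  have key : Gbar f α S Q μ u
      - (1 / (2 * (b : ℝ))) • ∑ i : Fin b, (⟪u i, mvec (Q * H * Q) (u i)⟫ : ℝ) • M i
      = (1 / (2 * (b : ℝ) * α ^ 2)) • ∑ i : Fin b, ε i • M i := by
    ext k l
    simp only [Gbar, Matrix.sub_apply, Matrix.smul_apply, Matrix.sum_apply, smul_eq_mul,
      hMdef, Matrix.of_apply, hεdef, hvdef]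
    rw [Finset.mul_sum, Finset.mul_sum, Finset.mul_sum, ← Finset.sum_sub_distrib]
    refine Finset.sum_congr rfl fun i _ => ?_
    have hcc : (1:ℝ) / (2 * (b:ℝ)) = 1 / (2 * (b:ℝ) * α ^ 2) * α ^ 2 := by
      field_simp
    rw [hcc]
    ring
  have hgoal_eq : Gbar f α S Q μ u
      - (1 / (2 * (b : ℝ))) • ∑ i : Fin b,
          (⟪u i, mvec (Q * H * Q) (u i)⟫ : ℝ) •
            (Matrix.of fun k l => (Q⁻¹.mulVec (toPi (u i))) k * (Q⁻¹.mulVec (toPi (u i))) l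
              - S⁻¹ k l)
      = (1 / (2 * (b : ℝ) * α ^ 2)) • ∑ i : Fin b, ε i • M i := key
  rw [hgoal_eq]
  -- final norm estimate
  have hfin : matOpNorm ((1 / (2 * (b : ℝ) * α ^ 2)) • ∑ i : Fin b, ε i • M i)
      ≤ (1 / (2 * (b : ℝ) * α ^ 2)) *
        ((b : ℝ) * (γ / 2 * (α ^ 3 * (c ^ ((3:ℝ)/2) / τ ^ ((3:ℝ)/2))) * (ζ * c + ζ))) := by
    rw [matOpNorm_smul]
    have ha : |1 / (2 * (b : ℝ) * α ^ 2)| = 1 / (2 * (b : ℝ) * α ^ 2) := by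
      rw [abs_of_pos]; positivity
    rw [ha]
    apply mul_le_mul_of_nonneg_left _ (by positivity)
    calc matOpNorm (∑ i : Fin b, ε i • M i) ≤ ∑ i : Fin b, matOpNorm (ε i • M i) :=
        matOpNorm_sum_le _
    _ = ∑ i : Fin b, |ε i| * matOpNorm (M i) := by
        refine Finset.sum_congr rfl fun i _ => ?_
        exact matOpNorm_smul _ _
    _ ≤ ∑ i : Fin b, (γ / 2 * (α ^ 3 * (c ^ ((3:ℝ)/2) / τ ^ ((3:ℝ)/2)))) * (ζ * c + ζ) := by
        refine Finset.sum_le_sum fun i _ => ?_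
        refine mul_le_mul (hε i) (hM i) ?_ ?_
        · exact norm_nonneg _
        · positivity
    _ = (b : ℝ) * (γ / 2 * (α ^ 3 * (c ^ ((3:ℝ)/2) / τ ^ ((3:ℝ)/2))) * (ζ * c + ζ)) := by
        rw [Finset.sum_const, Finset.card_univ, Fintype.card_fin, nsmul_eq_mul]
  refine le_trans hfin (le_of_eq ?_)
  have hτ32 : (0:ℝ) < τ ^ ((3:ℝ)/2) := Real.rpow_pos_of_pos hτ _
  field_simp
  ring
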